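/- Let f ∈ ℚ⟦x,y⟧ be a formal power series in two variables with constant term f(0,0) = 1 satisfying x f^3 − y = f − f^2. Set Δ = 1 + 4x + 4y + 18xy − 27x^2y^2 and g = 1 + 4x − 2xf − 3x^2 f^2. Then g(g − 1 − 3x)^2 = x^2 Δ in ℚ⟦x,y⟧. -/

import Mathlib

open MvPowerSeries

/-- if `f ∈ ℚ⟦x,y⟧` has constant term `1` and satisfies `x f³ - y = f - f²`,
then `g = 1 + 4x - 2xf - 3x²f²` satisfies `g(g - 1 - 3x)² = x²Δ` with
`Δ = 1 + 4x + 4y + 18xy - 27x²y²`. -/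
theorem hornG3_algebraic_relation (f : MvPowerSeries (Fin 2) ℚ)
    (hconst : MvPowerSeries.constantCoeff f = 1)
    (hf : (MvPowerSeries.X 0) * f ^ 3 - MvPowerSeries.X 1 = f - f ^ 2) :
    (1 + 4 * MvPowerSeries.X 0 - 2 * MvPowerSeries.X 0 * f
        - 3 * (MvPowerSeries.X 0) ^ 2 * f ^ 2) *
      ((1 + 4 * MvPowerSeries.X 0 - 2 * MvPowerSeries.X 0 * f
        - 3 * (MvPowerSeries.X 0) ^ 2 * f ^ 2) - 1 - 3 * MvPowerSeries.X 0) ^ 2 =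
    (MvPowerSeries.X 0) ^ 2 *
      (1 + 4 * MvPowerSeries.X 0 + 4 * MvPowerSeries.X 1
        + 18 * MvPowerSeries.X 0 * MvPowerSeries.X 1
        - 27 * (MvPowerSeries.X 0) ^ 2 * (MvPowerSeries.X 1) ^ 2) := by
  have hy : MvPowerSeries.X (σ := Fin 2) (R := ℚ) 1
      = MvPowerSeries.X 0 * f ^ 3 - (f - f ^ 2) := by
    rw [← hf]; ring
  rw [hy]; ring
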